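/- Let Ĝ ∈ R^{p×p} be symmetric, Ẑ ∈ R^p, β^0 ∈ R^p with support S, and let β̂^λ be any solution of min ‖β‖_1 subject to ‖Ẑ − Ĝβ‖_∞ ≤ λ. Define z* = ‖Ẑ − Ĝβ^0‖_∞ and the causal cone invertibility factor CCIF_q(S, Ĝ) = inf { |S|^{1/q} ‖Ĝu‖_∞ / ‖u‖_q : ‖u_{S^c}‖_1 ≤ ‖u_S‖_1, u ≠ 0 }. Then on the event z* ≤ λ, for every q ≥ 1 one has ‖β̂^λ − β^0‖_q ≤ |S|^{1/q}(λ + z*)/CCIF_q(S, Ĝ) ≤ 2|S|^{1/q} λ / CCIF_q(S, Ĝ). -/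

import Mathlib

open Finset

/-- The ℓ_q norm of a vector, for real `q ≥ 1`. -/
noncomputable def lqNorm {p : ℕ} (q : ℝ) (u : Fin p → ℝ) : ℝ :=
  (∑ i, |u i| ^ q) ^ (1 / q)

/-- The ℓ_∞ norm of a vector. -/
noncomputable def linftyNorm {p : ℕ} (u : Fin p → ℝ) : ℝ := ⨆ i, |u i|

/-- The causal cone invertibility factor
`CCIF_q(S, G) = inf { |S|^{1/q} ‖Gu‖_∞ / ‖u‖_q : ‖u_{Sᶜ}‖₁ ≤ ‖u_S‖₁, u ≠ 0 }`. -/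
noncomputable def CCIF {p : ℕ} (q : ℝ) (S : Finset (Fin p))
    (G : Matrix (Fin p) (Fin p) ℝ) : ℝ :=
  sInf { r : ℝ | ∃ u : Fin p → ℝ, u ≠ 0 ∧ (∑ i ∈ Sᶜ, |u i| ≤ ∑ i ∈ S, |u i|) ∧
      r = (S.card : ℝ) ^ (1 / q) * linftyNorm (G.mulVec u) / lqNorm q u }

lemma linftyNorm_nonneg {p : ℕ} (u : Fin p → ℝ) : 0 ≤ linftyNorm u :=
  Real.iSup_nonneg fun i => abs_nonneg _

lemma le_linftyNorm {p : ℕ} (u : Fin p → ℝ) (i : Fin p) : |u i| ≤ linftyNorm u :=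
  le_ciSup (f := fun j => |u j|) (Set.Finite.bddAbove (Set.finite_range _)) i

lemma lqNorm_nonneg {p : ℕ} (q : ℝ) (u : Fin p → ℝ) : 0 ≤ lqNorm q u :=
  Real.rpow_nonneg (Finset.sum_nonneg fun i _ => Real.rpow_nonneg (abs_nonneg _) q) _

lemma linftyNorm_sub_le {p : ℕ} (x y : Fin p → ℝ) :
    linftyNorm (x - y) ≤ linftyNorm x + linftyNorm y := by
  rcases isEmpty_or_nonempty (Fin p) with h | h
  · simp [linftyNorm, Real.iSup_of_isEmpty]
  · refine ciSup_le fun i => ?_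
    calc |(x - y) i| = |x i - y i| := rfl
      _ ≤ |x i| + |y i| := abs_sub _ _
      _ ≤ linftyNorm x + linftyNorm y := add_le_add (le_linftyNorm x i) (le_linftyNorm y i)

/-- Finite sample bound for the regularized causal Dantzig: on the event `z* ≤ λ`,
`‖βhat - β0‖_q ≤ |S|^{1/q}(λ + z*)/CCIF_q(S, Ĝ) ≤ 2|S|^{1/q} λ / CCIF_q(S, Ĝ)`. -/
theorem causal_dantzig_finite_sample_bound {p : ℕ}
    (Ghat : Matrix (Fin p) (Fin p) ℝ) (hGsymm : Ghat.IsSymm)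
    (Zhat : Fin p → ℝ) (β0 βhat : Fin p → ℝ) (lam : ℝ)
    (S : Finset (Fin p)) (hS : ∀ k, k ∈ S ↔ β0 k ≠ 0)
    (zstar : ℝ) (hzstar : zstar = linftyNorm (Zhat - Ghat.mulVec β0))
    (hfeas : linftyNorm (Zhat - Ghat.mulVec βhat) ≤ lam)
    (hopt : ∀ β : Fin p → ℝ, linftyNorm (Zhat - Ghat.mulVec β) ≤ lam →
      ∑ i, |βhat i| ≤ ∑ i, |β i|)
    (hevent : zstar ≤ lam)
    (q : ℝ) (hq : 1 ≤ q) (hccif : 0 < CCIF q S Ghat) :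
    lqNorm q (βhat - β0) ≤ (S.card : ℝ) ^ (1 / q) * (lam + zstar) / CCIF q S Ghat ∧
      (S.card : ℝ) ^ (1 / q) * (lam + zstar) / CCIF q S Ghat ≤
        2 * (S.card : ℝ) ^ (1 / q) * lam / CCIF q S Ghat := by
  have hq0 : q ≠ 0 := by linarith
  have hz0 : 0 ≤ zstar := hzstar ▸ linftyNorm_nonneg _
  have hc0 : (0 : ℝ) ≤ (S.card : ℝ) ^ (1 / q) :=
    Real.rpow_nonneg (Nat.cast_nonneg _) _
  set c : ℝ := (S.card : ℝ) ^ (1 / q) with hc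
  -- second inequality
  have hsecond : c * (lam + zstar) / CCIF q S Ghat ≤
      2 * c * lam / CCIF q S Ghat := by
    exact div_le_div_of_nonneg_right (by nlinarith) hccif.le
  refine ⟨?_, hsecond⟩
  set u : Fin p → ℝ := βhat - β0 with hu
  by_cases hu0 : u = 0
  · have : lqNorm q u = 0 := by
      simp [lqNorm, hu0, Real.zero_rpow hq0, Real.zero_rpow (inv_ne_zero hq0),
        Real.zero_rpow (one_div_ne_zero hq0)]
    rw [this]
    exact div_nonneg (mul_nonneg hc0 (by linarith)) hccif.le
  -- cone condition
  have hopt0 : ∑ i, |βhat i| ≤ ∑ i, |β0 i| := hopt β0 (hzstar ▸ hevent)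
  have hSc0 : ∀ i ∈ Sᶜ, β0 i = 0 := by
    intro i hi
    by_contra h
    exact (Finset.mem_compl.mp hi) ((hS i).mpr h)
  have hcone : ∑ i ∈ Sᶜ, |u i| ≤ ∑ i ∈ S, |u i| := by
    have h1 : ∑ i ∈ S, |βhat i| + ∑ i ∈ Sᶜ, |βhat i| = ∑ i, |βhat i| :=
      Finset.sum_add_sum_compl S _
    have h2 : ∑ i, |β0 i| = ∑ i ∈ S, |β0 i| := by
      rw [← Finset.sum_add_sum_compl S fun i => |β0 i|]
      have : ∑ i ∈ Sᶜ, |β0 i| = 0 :=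
        Finset.sum_eq_zero fun i hi => by rw [hSc0 i hi, abs_zero]
      linarith
    have h3 : ∑ i ∈ Sᶜ, |u i| = ∑ i ∈ Sᶜ, |βhat i| :=
      Finset.sum_congr rfl fun i hi => by
        simp [hu, Pi.sub_apply, hSc0 i hi]
    have h4 : ∑ i ∈ S, (|β0 i| - |βhat i|) ≤ ∑ i ∈ S, |u i| :=
      Finset.sum_le_sum fun i _ => by
        have := abs_sub_abs_le_abs_sub (β0 i) (βhat i)
        have h5 : |β0 i - βhat i| = |u i| := by rw [abs_sub_comm]; rfl
        linarith
    rw [Finset.sum_sub_distrib] at h4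
    linarith
  -- CCIF is at most the ratio for u
  have hbdd : BddBelow { r : ℝ | ∃ v : Fin p → ℝ, v ≠ 0 ∧
      (∑ i ∈ Sᶜ, |v i| ≤ ∑ i ∈ S, |v i|) ∧
      r = c * linftyNorm (Ghat.mulVec v) / lqNorm q v } := by
    refine ⟨0, fun r hr => ?_⟩
    obtain ⟨v, _, _, rfl⟩ := hr
    exact div_nonneg (mul_nonneg hc0 (linftyNorm_nonneg _)) (lqNorm_nonneg _ _)
  have hmem : c * linftyNorm (Ghat.mulVec u) / lqNorm q u ∈
      { r : ℝ | ∃ v : Fin p → ℝ, v ≠ 0 ∧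
        (∑ i ∈ Sᶜ, |v i| ≤ ∑ i ∈ S, |v i|) ∧
        r = c * linftyNorm (Ghat.mulVec v) / lqNorm q v } :=
    ⟨u, hu0, hcone, rfl⟩
  have hle : CCIF q S Ghat ≤ c * linftyNorm (Ghat.mulVec u) / lqNorm q u :=
    csInf_le hbdd hmem
  have hN0 : 0 < lqNorm q u := by
    rcases (lqNorm_nonneg q u).lt_or_eq with h | h
    · exact h
    · exfalso
      rw [← h, div_zero] at hle
      exact absurd hle (not_le.mpr hccif)
  -- bound on ‖G u‖_∞
  have hGu : linftyNorm (Ghat.mulVec u) ≤ lam + zstar := by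
    have heq : Ghat.mulVec u =
        (Zhat - Ghat.mulVec β0) - (Zhat - Ghat.mulVec βhat) := by
      rw [hu, Matrix.mulVec_sub]
      ext i
      simp [Pi.sub_apply]
    calc linftyNorm (Ghat.mulVec u)
        ≤ linftyNorm (Zhat - Ghat.mulVec β0) + linftyNorm (Zhat - Ghat.mulVec βhat) := by
          rw [heq]; exact linftyNorm_sub_le _ _
      _ ≤ zstar + lam := add_le_add (le_of_eq hzstar.symm) hfeas
      _ = lam + zstar := by ring
  -- conclude
  rw [le_div_iff₀ hccif]
  have h6 : CCIF q S Ghat * lqNorm q u ≤ c * linftyNorm (Ghat.mulVec u) :=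
    (le_div_iff₀ hN0).mp hle
  calc lqNorm q u * CCIF q S Ghat = CCIF q S Ghat * lqNorm q u := by ring
    _ ≤ c * linftyNorm (Ghat.mulVec u) := h6
    _ ≤ c * (lam + zstar) := mul_le_mul_of_nonneg_left hGu hc0
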